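/- Let (f_k)_{k≥0} be a real sequence, let (η_k)_{k≥0} satisfy 0 < η_k ≤ 1 for all k, and define Q_0 = 1, Q_{k+1} = η_k Q_k + 1, C_0 = f_0, C_{k+1} = (η_k Q_k C_k + f_{k+1})/Q_{k+1}. Assume that for every k the nonmonotone line search condition f_{k+1} ≤ C_k holds. Then for every k, f_k ≤ C_k ≤ A_k, where A_k = (1/(k+1)) ∑_{i=0}^{k} f_i is the arithmetic mean of the first k+1 function values. (This is Lemma 4.1.) -/

import Mathlib

/-- Lemma 4.1: in the Zhang–Hager nonmonotone averaging scheme, if the line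
search condition `f_{k+1} ≤ C_k` holds for all `k`, then `f_k ≤ C_k ≤ A_k`,
where `A_k` is the arithmetic mean of `f_0, …, f_k`. -/
theorem stmt2 (f η Q C : ℕ → ℝ)
    (hη : ∀ k, 0 < η k ∧ η k ≤ 1)
    (hQ0 : Q 0 = 1) (hQ : ∀ k, Q (k + 1) = η k * Q k + 1)
    (hC0 : C 0 = f 0) (hC : ∀ k, C (k + 1) = (η k * Q k * C k + f (k + 1)) / Q (k + 1))
    (hls : ∀ k, f (k + 1) ≤ C k) :
    ∀ k, f k ≤ C k ∧ C k ≤ (∑ i ∈ Finset.range (k + 1), f i) / (k + 1) := by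
  have hQbd : ∀ k, 1 ≤ Q k ∧ Q k ≤ k + 1 := by
    intro k
    induction k with
    | zero => simp [hQ0]
    | succ n ih =>
      obtain ⟨h1, h2⟩ := ih
      obtain ⟨hη0, hη1⟩ := hη n
      constructor
      · rw [hQ]; nlinarith
      · rw [hQ]; push_cast; nlinarith
  intro k
  induction k with
  | zero => simp [hC0]
  | succ n ih =>
    obtain ⟨hf, hA⟩ := ih
    obtain ⟨hη0, hη1⟩ := hη n
    obtain ⟨hQ1, hQ2⟩ := hQbd n
    set t := η n * Q n with ht
    have ht0 : 0 < t := by positivity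
    have htle : t ≤ (n : ℝ) + 1 := by nlinarith
    have hQn1 : Q (n + 1) = t + 1 := hQ n
    have hCn1 : C (n + 1) = (t * C n + f (n + 1)) / (t + 1) := by
      rw [hC, hQn1]
    have hlsn := hls n
    have ht1 : (0:ℝ) < t + 1 := by linarith
    constructor
    · rw [hCn1, le_div_iff₀ ht1]
      nlinarith
    · have step1 : C (n + 1) ≤ (((n:ℝ) + 1) * C n + f (n + 1)) / ((n:ℝ) + 2) := by
        rw [hCn1, div_le_div_iff₀ ht1 (by positivity)]
        nlinarith
      have hfC : f (n + 1) ≤ C (n + 1) := by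
        rw [hCn1, le_div_iff₀ ht1]; nlinarith
      have hCsum : ((n:ℝ) + 1) * C n ≤ ∑ i ∈ Finset.range (n + 1), f i := by
        have := (le_div_iff₀ (by positivity : (0:ℝ) < (n:ℝ) + 1)).mp hA
        linarith
      have hsum : ∑ i ∈ Finset.range (n + 1 + 1), f i
          = (∑ i ∈ Finset.range (n + 1), f i) + f (n + 1) := by
        rw [Finset.sum_range_succ]
      rw [hsum]
      push_cast
      rw [le_div_iff₀ (by positivity : (0:ℝ) < (n:ℝ) + 1 + 1)]
      calc C (n + 1) * ((n:ℝ) + 1 + 1)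
          ≤ (((n:ℝ) + 1) * C n + f (n + 1)) := by
            have := step1
            rw [le_div_iff₀ (by positivity : (0:ℝ) < (n:ℝ) + 2)] at this
            linarith
        _ ≤ (∑ i ∈ Finset.range (n + 1), f i) + f (n + 1) := by linarith
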